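/- For every N ≥ 2 and every KC-PMI P on N parties, every essential β-set is positive: for every X ⊆ ⟦N⟧ with |X| ≥ 2, if β(X) ∩ A ≠ ∅ then β(X) ⊆ P̄. -/
import Mathlib


namespace HEC

/-- The parties `⟦N⟧ = {0,1,…,N}`, where `0` is the purifier. -/
abbrev Party (N : ℕ) := Fin (N + 1)

/-- A collection of parties. -/
abbrev PSet (N : ℕ) := Finset (Party N)

/-- MI instances: unordered pairs of subsets of parties. -/
abbrev MI (N : ℕ) := Sym2 (PSet N)

/-- `m` is an MI instance, i.e. an unordered pair of disjoint nonempty subsets of `⟦N⟧`. -/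
def IsMIInst {N : ℕ} (m : MI N) : Prop :=
  ∃ Y Z : PSet N, m = s(Y, Z) ∧ Y.Nonempty ∧ Z.Nonempty ∧ Disjoint Y Z

/-- The MI-poset order: `{Y,Z} ⪯ {Y',Z'}` iff (`Y ⊆ Y'` and `Z ⊆ Z'`) or
(`Y ⊆ Z'` and `Z ⊆ Y'`).  (The two cases are absorbed by the existential over
representatives of the unordered pairs.) -/
def MIle {N : ℕ} (m m' : MI N) : Prop :=
  ∃ Y Z Y' Z' : PSet N, m = s(Y, Z) ∧ m' = s(Y', Z') ∧ Y ⊆ Y' ∧ Z ⊆ Z'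

/-- An `N`-party entropy vector, extended to all subsets of `⟦N⟧` by the purification
convention: `S ∅ = 0` and `S Y = S (⟦N⟧ \ Y)` whenever `0 ∈ Y`. -/
structure EntropyVec (N : ℕ) where
  S : PSet N → ℝ
  S_empty : S ∅ = 0
  S_purify : ∀ Y : PSet N, (0 : Party N) ∈ Y → S Y = S (Finset.univ \ Y)

/-- Mutual information `I(Y:Z) = S_Y + S_Z - S_{Y∪Z}`. -/
def EntropyVec.I {N : ℕ} (v : EntropyVec N) (Y Z : PSet N) : ℝ :=
  v.S Y + v.S Z - v.S (Y ∪ Z)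

/-- Membership in the subadditivity cone: `I(Y:Z) ≥ 0` for every MI instance. -/
def EntropyVec.InSAC {N : ℕ} (v : EntropyVec N) : Prop :=
  ∀ Y Z : PSet N, Y.Nonempty → Z.Nonempty → Disjoint Y Z → 0 ≤ v.I Y Z

/-- The pattern of marginal independence of `v`: the MI instances vanishing on `v`. -/
def EntropyVec.PMI {N : ℕ} (v : EntropyVec N) : Set (MI N) :=
  {m | ∃ Y Z : PSet N, m = s(Y, Z) ∧ Y.Nonempty ∧ Z.Nonempty ∧ Disjoint Y Z ∧ v.I Y Z = 0}

/-- `P` is a down-set in the MI-poset. -/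
def IsMIDownSet {N : ℕ} (P : Set (MI N)) : Prop :=
  ∀ m m' : MI N, IsMIInst m → m' ∈ P → MIle m m' → m ∈ P

/-- `P` is a KC-PMI: the PMI of some entropy vector in the subadditivity cone,
which moreover is a down-set in the MI-poset. -/
def IsKCPMI {N : ℕ} (P : Set (MI N)) : Prop :=
  (∃ v : EntropyVec N, v.InSAC ∧ P = v.PMI) ∧ IsMIDownSet P

/-- The β-set of `X`: all MI instances `{Y,Z}` with `Y ∪ Z = X`. -/
def betaSet {N : ℕ} (X : PSet N) : Set (MI N) :=
  {m | ∃ Y Z : PSet N, m = s(Y, Z) ∧ Y.Nonempty ∧ Z.Nonempty ∧ Disjoint Y Z ∧ Y ∪ Z = X}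

/-- The antichain `A` of minimal elements of `P̄ = M_N ∖ P`. -/
def minimalMI {N : ℕ} (P : Set (MI N)) : Set (MI N) :=
  {m | IsMIInst m ∧ m ∉ P ∧ ∀ m' : MI N, IsMIInst m' → m' ∉ P → MIle m' m → m' = m}

/-- `β(X)` is positive: `β(X) ⊆ P̄`. -/
def BPos {N : ℕ} (P : Set (MI N)) (X : PSet N) : Prop :=
  ∀ m ∈ betaSet X, m ∉ P

/-- `β(X)` is vanishing: `β(X) ⊆ P`. -/
def BVan {N : ℕ} (P : Set (MI N)) (X : PSet N) : Prop :=
  betaSet X ⊆ P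

/-- `β(X)` is partial: it has elements both in `P` and in `P̄`. -/
def BPart {N : ℕ} (P : Set (MI N)) (X : PSet N) : Prop :=
  (∃ m ∈ betaSet X, m ∈ P) ∧ (∃ m ∈ betaSet X, m ∉ P)

/-- `β(X)` is essential: `β(X) ∩ A ≠ ∅`. -/
def BEss {N : ℕ} (P : Set (MI N)) (X : PSet N) : Prop :=
  ∃ m ∈ betaSet X, m ∈ minimalMI P

/-- `β(X)` is completely essential: `β(X) ⊆ A`. -/
def BCEss {N : ℕ} (P : Set (MI N)) (X : PSet N) : Prop :=
  betaSet X ⊆ minimalMI P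

/-- `β(X)` is non-essential: `β(X) ∩ A = ∅`. -/
def BNEss {N : ℕ} (P : Set (MI N)) (X : PSet N) : Prop :=
  ∀ m ∈ betaSet X, m ∉ minimalMI P

/-- `pos_<(Y)`: the proper subsystems `Z ⊊ Y` with `|Z| ≥ 2` and `β(Z)` positive. -/
def posBelow {N : ℕ} (P : Set (MI N)) (Y : PSet N) : Set (PSet N) :=
  {Z | Z ⊂ Y ∧ 2 ≤ Z.card ∧ BPos P Z}

/-- `Max(pos_<(Y))`: the inclusion-maximal elements of `pos_<(Y)`. -/
def maxPosBelow {N : ℕ} (P : Set (MI N)) (Y : PSet N) : Set (PSet N) :=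
  {Z | Z ∈ posBelow P Y ∧ ∀ Z' ∈ posBelow P Y, Z ⊆ Z' → Z = Z'}

/-- The MI instance `m = {Y,Z}` splits `X` if `X ∩ Y ≠ ∅` and `X ∩ Z ≠ ∅`. -/
def Splits {N : ℕ} (m : MI N) (X : PSet N) : Prop :=
  ∃ Y Z : PSet N, m = s(Y, Z) ∧ (X ∩ Y).Nonempty ∧ (X ∩ Z).Nonempty

/-- The hyperedges of the correlation hypergraph `H_P`: one hyperedge `e_X` for each
`X ⊆ ⟦N⟧` (with `|X| ≥ 2`) whose β-set is positive.  Vertices `v_ℓ` are identified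
with the parties `ℓ ∈ ⟦N⟧`, and hyperedges with the corresponding subsystems. -/
def Hedge {N : ℕ} (P : Set (MI N)) : Set (PSet N) :=
  {X | 2 ≤ X.card ∧ BPos P X}

/-- The hyperedges of the sub-hypergraph `H_Y`: the hyperedges `e_Z` with `Z ⊊ Y`. -/
def subEdges {N : ℕ} (P : Set (MI N)) (Y : PSet N) : Set (PSet N) :=
  {Z | Z ⊂ Y ∧ Z ∈ Hedge P}

/-- One step in a hypergraph with hyperedge set `E`: `a` and `b` lie in a common
hyperedge. -/
def hStep {N : ℕ} (E : Set (PSet N)) (a b : Party N) : Prop :=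
  ∃ e ∈ E, a ∈ e ∧ b ∈ e

/-- Connectivity of the hypergraph with vertex set `V` and hyperedge set `E`:
every two vertices are joined by a path (a one-vertex hypergraph is connected). -/
def hConn {N : ℕ} (V : PSet N) (E : Set (PSet N)) : Prop :=
  ∀ a ∈ V, ∀ b ∈ V, Relation.ReflTransGen (hStep E) a b

/-- The vertex set of the connected component of `a` in the hypergraph with
vertex set `V` and hyperedge set `E`. -/
def hComp {N : ℕ} (V : PSet N) (E : Set (PSet N)) (a : Party N) : Set (Party N) :=
  {b | b ∈ V ∧ Relation.ReflTransGen (hStep E) a b}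

/-- A clique of the line graph `L_{H_P}`: a set of hyperedges of `H_P` which are
pairwise adjacent (distinct hyperedges being adjacent iff they intersect). -/
def IsLineClique {N : ℕ} (P : Set (MI N)) (Q : Set (PSet N)) : Prop :=
  Q ⊆ Hedge P ∧ ∀ e ∈ Q, ∀ f ∈ Q, e ≠ f → (e ∩ f).Nonempty

/-- A max-clique of the line graph `L_{H_P}`: a (nonempty) clique which is maximal
under inclusion. -/
def IsMaxClique {N : ℕ} (P : Set (MI N)) (Q : Set (PSet N)) : Prop :=
  Q.Nonempty ∧ IsLineClique P Q ∧ ∀ Q' : Set (PSet N), IsLineClique P Q' → Q ⊆ Q' → Q = Q'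

/-- `Q^∩`: the intersection of the hyperedges in `Q`, viewed as sets of vertices. -/
def qInter {N : ℕ} (Q : Set (PSet N)) : Set (Party N) :=
  {ℓ | ∀ e ∈ Q, ℓ ∈ e}

/-- Extract vanishing mutual information from PMI membership. -/
lemma I_zero_of_mem_PMI {N : ℕ} (v : EntropyVec N) {Y Z : PSet N}
    (h : s(Y, Z) ∈ v.PMI) : v.I Y Z = 0 := by
  obtain ⟨Y1, Z1, heq, _, _, _, hI⟩ := h
  rw [Sym2.eq_iff] at heq
  rcases heq with ⟨rfl, rfl⟩ | ⟨rfl, rfl⟩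
  · exact hI
  · unfold EntropyVec.I at hI ⊢
    rw [Finset.union_comm]; linarith

/-- Subadditivity for arbitrary disjoint sets (allowing empty ones). -/
lemma SA_le {N : ℕ} (v : EntropyVec N) (hv : v.InSAC) {U W : PSet N}
    (hd : Disjoint U W) : v.S (U ∪ W) ≤ v.S U + v.S W := by
  rcases U.eq_empty_or_nonempty with rfl | hU
  · simp [v.S_empty]
  rcases W.eq_empty_or_nonempty with rfl | hW
  · simp [v.S_empty]
  have := hv U W hU hW hd
  unfold EntropyVec.I at this; linarith

/-- Additivity for sub-instances of a minimal element of `P̄`. -/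
lemma key_add {N : ℕ} (v : EntropyVec N) {Y Z U W : PSet N}
    (hdisj : Disjoint Y Z) (hU : U ⊆ Y) (hW : W ⊆ Z)
    (hne : ¬(U = Y ∧ W = Z)) (hZne : Z.Nonempty)
    (hmin : ∀ m' : MI N, IsMIInst m' → m' ∉ v.PMI → MIle m' s(Y, Z) → m' = s(Y, Z)) :
    v.S (U ∪ W) = v.S U + v.S W := by
  rcases U.eq_empty_or_nonempty with rfl | hUne
  · simp [v.S_empty]
  rcases W.eq_empty_or_nonempty with rfl | hWne
  · simp [v.S_empty]
  have hdUW : Disjoint U W := hdisj.mono hU hW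
  by_cases hmem : s(U, W) ∈ v.PMI
  · have := I_zero_of_mem_PMI v hmem
    unfold EntropyVec.I at this; linarith
  · have heq := hmin s(U, W) ⟨U, W, rfl, hUne, hWne, hdUW⟩ hmem
      ⟨U, W, Y, Z, rfl, rfl, hU, hW⟩
    rw [Sym2.eq_iff] at heq
    rcases heq with ⟨h1, h2⟩ | ⟨h1, h2⟩
    · exact absurd ⟨h1, h2⟩ hne
    · exact absurd (hdisj.symm.eq_bot_of_le (h1 ▸ hU)) hZne.ne_empty

/-- For every `N ≥ 2` and every KC-PMI `P`, every essential β-set is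
positive: if `β(X) ∩ A ≠ ∅` then `β(X) ⊆ P̄`. -/
theorem statement4 {N : ℕ} (hN : 2 ≤ N) (P : Set (MI N)) (hP : IsKCPMI P)
    (X : PSet N) (hX : 2 ≤ X.card) (hEss : BEss P X) :
    BPos P X := by
  obtain ⟨⟨v, hv, rfl⟩, _⟩ := hP
  obtain ⟨m, hmβ, _, hmnotP, hmin⟩ := hEss
  obtain ⟨Y, Z, rfl, hYne, hZne, hYZd, hYZX⟩ := hmβ
  rintro m' ⟨Y', Z', rfl, hY'ne, hZ'ne, hY'Z'd, hY'Z'X⟩ hm'P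
  have hI' : v.I Y' Z' = 0 := I_zero_of_mem_PMI v hm'P
  set A1 := Y ∩ Y' with hA1
  set A2 := Y ∩ Z' with hA2
  set B1 := Z ∩ Y' with hB1
  set B2 := Z ∩ Z' with hB2
  have hYsub : Y ⊆ X := hYZX ▸ Finset.subset_union_left
  have hZsub : Z ⊆ X := hYZX ▸ Finset.subset_union_right
  have hY'sub : Y' ⊆ X := hY'Z'X ▸ Finset.subset_union_left
  have hZ'sub : Z' ⊆ X := hY'Z'X ▸ Finset.subset_union_right
  have hYeq : A1 ∪ A2 = Y := by
    rw [hA1, hA2, ← Finset.inter_union_distrib_left, hY'Z'X,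
      Finset.inter_eq_left.mpr hYsub]
  have hZeq : B1 ∪ B2 = Z := by
    rw [hB1, hB2, ← Finset.inter_union_distrib_left, hY'Z'X,
      Finset.inter_eq_left.mpr hZsub]
  have hY'eq : A1 ∪ B1 = Y' := by
    rw [hA1, hB1, ← Finset.union_inter_distrib_right, hYZX,
      Finset.inter_eq_right.mpr hY'sub]
  have hZ'eq : A2 ∪ B2 = Z' := by
    rw [hA2, hB2, ← Finset.union_inter_distrib_right, hYZX,
      Finset.inter_eq_right.mpr hZ'sub]
  -- S(Y') = S(A1) + S(B1)
  have h1 : v.S Y' = v.S A1 + v.S B1 := by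
    rw [← hY'eq]
    refine key_add v hYZd Finset.inter_subset_left Finset.inter_subset_left ?_ hZne hmin
    rintro ⟨e1, e2⟩
    have : X ⊆ Y' := by
      rw [← hYZX]
      exact Finset.union_subset (e1 ▸ Finset.inter_subset_right)
        (e2 ▸ Finset.inter_subset_right)
    exact hZ'ne.ne_empty (hY'Z'd.symm.eq_bot_of_le (hZ'sub.trans this))
  -- S(Z') = S(A2) + S(B2)
  have h2 : v.S Z' = v.S A2 + v.S B2 := by
    rw [← hZ'eq]
    refine key_add v hYZd Finset.inter_subset_left Finset.inter_subset_left ?_ hZne hmin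
    rintro ⟨e1, e2⟩
    have : X ⊆ Z' := by
      rw [← hYZX]
      exact Finset.union_subset (e1 ▸ Finset.inter_subset_right)
        (e2 ▸ Finset.inter_subset_right)
    exact hY'ne.ne_empty (hY'Z'd.eq_bot_of_le (hY'sub.trans this))
  -- subadditivity
  have hdA : Disjoint A1 A2 := hY'Z'd.mono Finset.inter_subset_right Finset.inter_subset_right
  have hdB : Disjoint B1 B2 := hY'Z'd.mono Finset.inter_subset_right Finset.inter_subset_right
  have hSAY : v.S Y ≤ v.S A1 + v.S A2 := hYeq ▸ SA_le v hv hdA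
  have hSAZ : v.S Z ≤ v.S B1 + v.S B2 := hZeq ▸ SA_le v hv hdB
  have hge : 0 ≤ v.I Y Z := hv Y Z hYne hZne hYZd
  have hX' : Y' ∪ Z' = X := hY'Z'X
  have hIYZ : v.I Y Z = 0 := by
    unfold EntropyVec.I at hI' hge ⊢
    rw [hX'] at hI'
    rw [hYZX]
    rw [hYZX] at hge
    linarith
  exact hmnotP ⟨Y, Z, rfl, hYne, hZne, hYZd, hIYZ⟩

end HEC
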